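/- arXiv:2204.02882 — 2 statements merged into one kernel-verified Lean document; each statement's English description precedes it below -/
import Mathlib

section
/- Let X be a hereditarily unicoherent continuum and x ∈ X. If the meager composant M_x is open in X, then M_x = X. In particular, no hereditarily unicoherent continuum has a proper open meager composant. -/
open Set Topology

/-- The meager composant of `x`: the union of all nowhere dense subcontinua containing `x`. -/
def MeagerComposant (X : Type) [TopologicalSpace X] (x : X) : Set X :=
  ⋃₀ {L : Set X | IsCompact L ∧ IsConnected L ∧ IsNowhereDense L ∧ x ∈ L}

/-- A continuum is hereditarily unicoherent if the intersection of any two subcontinua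
is connected (possibly empty, hence preconnected). -/
def HereditarilyUnicoherent (X : Type) [TopologicalSpace X] : Prop :=
  ∀ A B : Set X, IsCompact A → IsConnected A → IsCompact B → IsConnected B →
    IsPreconnected (A ∩ B)

/-- A subcontinuum `A` of `X` is ample if every open neighborhood of `A` contains a
subcontinuum having `A` in its interior. -/
def Ample {X : Type} [TopologicalSpace X] (A : Set X) : Prop :=
  ∀ U : Set X, IsOpen U → A ⊆ U →
    ∃ K : Set X, IsCompact K ∧ IsPreconnected K ∧ A ⊆ interior K ∧ K ⊆ U

/-- A set `C` is indecomposable if it is not the union of two proper subcontinua. -/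
def IndecomposableSet {X : Type} [TopologicalSpace X] (C : Set X) : Prop :=
  ¬ ∃ H K : Set X, IsCompact H ∧ IsConnected H ∧ IsCompact K ∧ IsConnected K ∧
    H ⊆ C ∧ K ⊆ C ∧ H ≠ C ∧ K ≠ C ∧ H ∪ K = C

section Aux

variable {X : Type} [TopologicalSpace X]

/-- Subsets of nowhere dense sets are nowhere dense. -/
lemma MC.nwd_mono {s t : Set X} (h : s ⊆ t) (ht : IsNowhereDense t) : IsNowhereDense s := by
  have hsub : interior (closure s) ⊆ interior (closure t) := interior_mono (closure_mono h)
  rw [IsNowhereDense] at ht ⊢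
  rw [ht] at hsub
  exact subset_empty_iff.mp hsub

/-- Unions of two nowhere dense sets are nowhere dense. -/
lemma MC.nwd_union {s t : Set X} (hs : IsNowhereDense s) (ht : IsNowhereDense t) :
    IsNowhereDense (s ∪ t) := by
  rw [IsNowhereDense, closure_union, eq_empty_iff_forall_notMem]
  intro z hz
  set U := interior (closure s ∪ closure t) with hU
  have hUopen : IsOpen U := isOpen_interior
  have h1 : U \ closure s ⊆ closure t := fun w hw => (interior_subset hw.1).resolve_left hw.2
  have h2 : U \ closure s ⊆ interior (closure t) :=
    interior_maximal h1 (hUopen.sdiff isClosed_closure)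
  rw [ht] at h2
  have h3 : U ⊆ closure s := by
    intro w hw
    by_contra hws
    exact h2 ⟨hw, hws⟩
  have h4 : U ⊆ interior (closure s) := interior_maximal h3 hUopen
  rw [hs] at h4
  exact h4 hz

/-- In a nontrivial connected T1 space, singletons are nowhere dense. -/
lemma MC.nwd_singleton [T1Space X] [ConnectedSpace X] [Nontrivial X] (x : X) :
    IsNowhereDense ({x} : Set X) := by
  rw [IsClosed.isNowhereDense_iff isClosed_singleton]
  by_contra h
  obtain ⟨y, hy⟩ := nonempty_iff_ne_empty.mpr h
  have hsub : interior ({x} : Set X) ⊆ {x} := interior_subset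
  have heq : interior ({x} : Set X) = {x} :=
    (Set.Nonempty.subset_singleton_iff ⟨y, hy⟩).mp hsub
  have hopen : IsOpen ({x} : Set X) := heq ▸ isOpen_interior
  have huniv : ({x} : Set X) = univ :=
    IsClopen.eq_univ ⟨isClosed_singleton, hopen⟩ ⟨x, rfl⟩
  obtain ⟨z, hz⟩ := exists_ne x
  exact hz (by have : z ∈ ({x} : Set X) := huniv ▸ mem_univ z; exact this)

/-- The family of subcontinua containing both `a` and `b`. -/
def MC.ContFam (a b : X) : Set (Set X) :=
  {K | IsCompact K ∧ IsPreconnected K ∧ a ∈ K ∧ b ∈ K}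

/-- The minimal continuum containing `a` and `b` (in a hereditarily unicoherent continuum). -/
def MC.minCont (a b : X) : Set X := ⋂₀ MC.ContFam a b

lemma MC.minCont_subset {a b : X} {K : Set X} (hK : K ∈ MC.ContFam a b) :
    MC.minCont a b ⊆ K := sInter_subset_of_mem hK

lemma MC.isClosed_minCont [T2Space X] (a b : X) : IsClosed (MC.minCont a b) :=
  isClosed_sInter fun _ hK => hK.1.isClosed

lemma MC.mem_left_minCont (a b : X) : a ∈ MC.minCont a b :=
  mem_sInter.mpr fun _ hK => hK.2.2.1

lemma MC.mem_right_minCont (a b : X) : b ∈ MC.minCont a b :=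
  mem_sInter.mpr fun _ hK => hK.2.2.2

end Aux

section Main

variable {X : Type} [MetricSpace X] [CompactSpace X] [ConnectedSpace X]
set_option linter.unusedSectionVars false

lemma MC.univ_mem_contFam (a b : X) : univ ∈ MC.ContFam a b :=
  ⟨isCompact_univ, isPreconnected_univ, mem_univ a, mem_univ b⟩

lemma MC.contFam_inter (hX : HereditarilyUnicoherent X) {a b : X} {K1 K2 : Set X}
    (h1 : K1 ∈ MC.ContFam a b) (h2 : K2 ∈ MC.ContFam a b) : K1 ∩ K2 ∈ MC.ContFam a b :=
  ⟨h1.1.inter h2.1,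
   hX K1 K2 h1.1 ⟨⟨a, h1.2.2.1⟩, h1.2.1⟩ h2.1 ⟨⟨a, h2.2.2.1⟩, h2.2.1⟩,
   ⟨h1.2.2.1, h2.2.2.1⟩, ⟨h1.2.2.2, h2.2.2.2⟩⟩

lemma MC.isCompact_minCont (a b : X) : IsCompact (MC.minCont a b) :=
  (MC.isClosed_minCont a b).isCompact

/-- The minimal continuum is preconnected. -/
lemma MC.isPreconnected_minCont (hX : HereditarilyUnicoherent X) (a b : X) :
    IsPreconnected (MC.minCont a b) := by
  rw [isPreconnected_iff_subset_of_fully_disjoint_closed (MC.isClosed_minCont a b)]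
  intro A B hA hB hsub hdisj
  obtain ⟨U, V, hU, hV, hAU, hBV, hUV⟩ := normal_separation hA hB hdisj
  have hexists : ∃ K ∈ MC.ContFam a b, K ⊆ U ∪ V := by
    by_contra hcon
    push_neg at hcon
    haveI : Nonempty (MC.ContFam a b) := ⟨⟨univ, MC.univ_mem_contFam a b⟩⟩
    have hne := IsCompact.nonempty_iInter_of_directed_nonempty_isCompact_isClosed
      (fun K : MC.ContFam a b => K.1 \ (U ∪ V))
      (fun K1 K2 => ⟨⟨K1.1 ∩ K2.1, MC.contFam_inter hX K1.2 K2.2⟩,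
        fun z hz => ⟨hz.1.1, hz.2⟩, fun z hz => ⟨hz.1.2, hz.2⟩⟩)
      (fun K => Set.not_subset.mp (hcon K.1 K.2) |>.imp fun z hz => ⟨hz.1, hz.2⟩)
      (fun K => K.2.1.diff (hU.union hV))
      (fun K => K.2.1.isClosed.sdiff (hU.union hV))
    obtain ⟨z, hz⟩ := hne
    have hzT : z ∈ MC.minCont a b := by
      rw [MC.minCont, mem_sInter]
      intro K hK
      exact (mem_iInter.mp hz ⟨K, hK⟩).1
    have hzUV : z ∉ U ∪ V := (mem_iInter.mp hz ⟨univ, MC.univ_mem_contFam a b⟩).2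
    rcases hsub hzT with hzA | hzB
    · exact hzUV (Or.inl (hAU hzA))
    · exact hzUV (Or.inr (hBV hzB))
  obtain ⟨K, hK, hKUV⟩ := hexists
  have hTK : MC.minCont a b ⊆ K := MC.minCont_subset hK
  by_cases hKV : (K ∩ V).Nonempty
  · by_cases hKU : (K ∩ U).Nonempty
    · obtain ⟨z, hz⟩ := hK.2.1 U V hU hV hKUV hKU hKV
      exact (Set.disjoint_left.mp hUV hz.2.1 hz.2.2).elim
    · -- K ⊆ V, so minCont ⊆ V, so minCont misses A, so minCont ⊆ B
      have hKsubV : K ⊆ V := fun z hz =>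
        (hKUV hz).resolve_left fun hu => hKU ⟨z, hz, hu⟩
      right
      intro z hz
      rcases hsub hz with hzA | hzB
      · exact (Set.disjoint_left.mp hUV (hAU hzA) (hKsubV (hTK hz))).elim
      · exact hzB
  · -- K ⊆ U
    have hKsubU : K ⊆ U := fun z hz =>
      (hKUV hz).resolve_right fun hv => hKV ⟨z, hz, hv⟩
    left
    intro z hz
    rcases hsub hz with hzA | hzB
    · exact hzA
    · exact (Set.disjoint_left.mp hUV (hKsubU (hTK hz)) (hBV hzB)).elim

/-- If `w` lies in the meager composant of `x`, the minimal continuum from `x` to `w`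
is nowhere dense. -/
lemma MC.minCont_nwd_of_mem {x w : X} (hw : w ∈ MeagerComposant X x) :
    IsNowhereDense (MC.minCont x w) := by
  obtain ⟨L, ⟨hLc, hLconn, hLnwd, hxL⟩, hwL⟩ := hw
  exact MC.nwd_mono (MC.minCont_subset ⟨hLc, hLconn.isPreconnected, hxL, hwL⟩) hLnwd

/-- If `q` is not in the meager composant of `x` but `w` is, then the minimal continuum
from `w` to `q` is not nowhere dense. -/
lemma MC.minCont_not_nwd (hX : HereditarilyUnicoherent X) {x w q : X}
    (hq : q ∉ MeagerComposant X x) (hw : w ∈ MeagerComposant X x) :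
    ¬ IsNowhereDense (MC.minCont w q) := by
  intro hnwd
  apply hq
  refine ⟨MC.minCont x w ∪ MC.minCont w q,
    ⟨(MC.isCompact_minCont x w).union (MC.isCompact_minCont w q),
     ⟨⟨x, Or.inl (MC.mem_left_minCont x w)⟩,
      IsPreconnected.union w (MC.mem_right_minCont x w) (MC.mem_left_minCont w q)
        (MC.isPreconnected_minCont hX x w) (MC.isPreconnected_minCont hX w q)⟩,
     MC.nwd_union (MC.minCont_nwd_of_mem hw) hnwd,
     Or.inl (MC.mem_left_minCont x w)⟩,
    Or.inr (MC.mem_right_minCont w q)⟩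

end Main

/-- No proper open meager composant: in a (nondegenerate) hereditarily unicoherent
continuum, an open meager composant must be the whole space. -/
theorem meagerComposant_eq_univ_of_isOpen (X : Type) [MetricSpace X] [CompactSpace X] [ConnectedSpace X] [Nonempty X] [Nontrivial X]
    (hX : HereditarilyUnicoherent X) (x : X)
    (hopen : IsOpen (MeagerComposant X x)) :
    MeagerComposant X x = Set.univ := by
  set M := MeagerComposant X x with hMdef
  have hxM : x ∈ M :=
    ⟨{x}, ⟨isCompact_singleton, isConnected_singleton, MC.nwd_singleton x, rfl⟩, rfl⟩
  -- Main step: closure M ⊆ M.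
  have hclosure : closure M ⊆ M := by
    intro q hq
    by_contra hqM
    -- M is preconnected, so closure M is a subcontinuum containing x and q.
    have hMpc : IsPreconnected M :=
      isPreconnected_sUnion x _ (fun L hL => hL.2.2.2) (fun L hL => hL.2.1.isPreconnected)
    have hTxq_sub : MC.minCont x q ⊆ closure M :=
      MC.minCont_subset ⟨isClosed_closure.isCompact, hMpc.closure, subset_closure hxM, hq⟩
    -- V := interior of the minimal continuum from x to q is nonempty.
    have hVne : (interior (MC.minCont x q)).Nonempty := by
      rw [nonempty_iff_ne_empty]
      intro hempty
      exact MC.minCont_not_nwd hX hqM hxM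
        ((MC.isClosed_minCont x q).isNowhereDense_iff.mpr hempty)
    -- Step 6: for every w ∈ M, interior (minCont x q) ⊆ minCont w q.
    have step6 : ∀ w ∈ M, interior (MC.minCont x q) ⊆ MC.minCont w q := by
      intro w hw v hv
      have hsplit : MC.minCont x q ⊆ MC.minCont x w ∪ MC.minCont w q :=
        MC.minCont_subset ⟨(MC.isCompact_minCont x w).union (MC.isCompact_minCont w q),
          IsPreconnected.union w (MC.mem_right_minCont x w) (MC.mem_left_minCont w q)
            (MC.isPreconnected_minCont hX x w) (MC.isPreconnected_minCont hX w q),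
          Or.inl (MC.mem_left_minCont x w), Or.inr (MC.mem_right_minCont w q)⟩
      have hvcl : v ∈ closure (interior (MC.minCont x q) \ MC.minCont x w) := by
        rw [mem_closure_iff]
        intro O hO hvO
        by_contra hnone
        rw [Set.not_nonempty_iff_eq_empty] at hnone
        have hsub2 : O ∩ interior (MC.minCont x q) ⊆ MC.minCont x w := by
          intro z hz
          by_contra hzw
          exact absurd (Set.eq_empty_iff_forall_notMem.mp hnone z ⟨hz.1, hz.2, hzw⟩) id
        have hsub3 : O ∩ interior (MC.minCont x q) ⊆ interior (closure (MC.minCont x w)) :=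
          interior_maximal (hsub2.trans subset_closure) (hO.inter isOpen_interior)
        have hnwd := MC.minCont_nwd_of_mem hw
        rw [IsNowhereDense] at hnwd
        rw [hnwd] at hsub3
        exact hsub3 ⟨hvO, hv⟩
      have hclsub : closure (interior (MC.minCont x q) \ MC.minCont x w) ⊆ MC.minCont w q :=
        closure_minimal
          (fun z hz => (hsplit (interior_subset hz.1)).resolve_left hz.2)
          (MC.isClosed_minCont w q)
      exact hclsub hvcl
    -- Pick w0 ∈ M inside V.
    obtain ⟨v0, hv0⟩ := hVne
    have hv0cl : v0 ∈ closure M := hTxq_sub (interior_subset hv0)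
    obtain ⟨w0, hw0V, hw0M⟩ :=
      (mem_closure_iff.mp hv0cl) _ isOpen_interior hv0
    -- Choose the radius ρ.
    have hw0q : w0 ≠ q := fun h => hqM (h ▸ hw0M)
    obtain ⟨ρ1, hρ1, hball1⟩ := Metric.isOpen_iff.mp hopen w0 hw0M
    set ρ := min ρ1 (dist w0 q / 3) with hρdef
    have hdq0 : 0 < dist w0 q := dist_pos.mpr hw0q
    have hρpos : 0 < ρ := lt_min hρ1 (by linarith)
    have hballM : Metric.ball w0 ρ ⊆ M :=
      (Metric.ball_subset_ball (min_le_left _ _)).trans hball1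
    have hdq : 3 * ρ ≤ dist w0 q := by
      have := min_le_right ρ1 (dist w0 q / 3)
      rw [hρdef]
      linarith
    -- Z is the minimal continuum from w0 to q; F is Z minus a small ball around w0.
    set Z := MC.minCont w0 q with hZdef
    set F := Z \ Metric.ball w0 (ρ / 2) with hFdef
    have hqZ : q ∈ Z := MC.mem_right_minCont w0 q
    have hw0Z : w0 ∈ Z := MC.mem_left_minCont w0 q
    have hqF : q ∈ F := by
      refine ⟨hqZ, ?_⟩
      rw [Metric.mem_ball, dist_comm]
      intro hlt
      linarith
    have hFclosed : IsClosed F := by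
      rw [hFdef, Set.diff_eq]
      exact (MC.isClosed_minCont w0 q).inter (Metric.isOpen_ball.isClosed_compl)
    have hFcpt : IsCompact F := hFclosed.isCompact
    haveI : CompactSpace F := isCompact_iff_compactSpace.mp hFcpt
    set qF : F := ⟨q, hqF⟩ with hqFdef
    set C : Set X := Subtype.val '' connectedComponent qF with hCdef
    have hqC : q ∈ C := ⟨qF, mem_connectedComponent, rfl⟩
    have hCsubF : C ⊆ F := by
      rintro _ ⟨z, _, rfl⟩
      exact z.2
    have hCcpt : IsCompact C :=
      (isClosed_connectedComponent.isCompact).image continuous_subtype_val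
    have hCpc : IsPreconnected C :=
      isPreconnected_connectedComponent.image _ continuous_subtype_val.continuousOn
    rcases (C ∩ Metric.ball w0 ρ).eq_empty_or_nonempty with hcase | hcase
    · -- Case 2: the component of q avoids the ball; produce a clopen separation of Z.
      set K : Set X := F ∩ Metric.closedBall w0 (3 * ρ / 4) with hKdef
      set K' : Set F := Subtype.val ⁻¹' K with hK'def
      have hK'closed : IsClosed K' :=
        (hFclosed.inter Metric.isClosed_closedBall).preimage continuous_subtype_val
      have hK'cpt : IsCompact K' := hK'closed.isCompact
      -- the component of qF misses K'
      have hCK' : ∀ z : F, z ∈ connectedComponent qF → z ∉ K' := by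
        intro z hz hzK
        have hzC : (z : X) ∈ C := ⟨z, hz, rfl⟩
        have hzball : (z : X) ∈ Metric.ball w0 ρ := by
          have h1 : (z : X) ∈ Metric.closedBall w0 (3 * ρ / 4) := hzK.2
          rw [Metric.mem_closedBall] at h1
          rw [Metric.mem_ball]
          linarith
        exact Set.eq_empty_iff_forall_notMem.mp hcase (z : X) ⟨hzC, hzball⟩
      -- cover K' by complements of clopen sets containing qF
      have hcover : K' ⊆ ⋃ s : { s : Set F // IsClopen s ∧ qF ∈ s }, (s.1)ᶜ := by
        intro z hz
        have hznotcc : z ∉ connectedComponent qF := fun h => hCK' z h hz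
        rw [connectedComponent_eq_iInter_isClopen qF] at hznotcc
        rw [mem_iUnion]
        by_contra hnot
        push_neg at hnot
        exact hznotcc (mem_iInter.mpr fun s => not_not.mp (by simpa using hnot s))
      obtain ⟨t, ht⟩ := hK'cpt.elim_finite_subcover
        (fun s : { s : Set F // IsClopen s ∧ qF ∈ s } => (s.1)ᶜ)
        (fun s => s.2.1.compl.isOpen) hcover
      set E' : Set F := ⋂ s ∈ t, (s : { s : Set F // IsClopen s ∧ qF ∈ s }).1 with hE'def
      have hE'clopen : IsClopen E' := isClopen_biInter_finset fun s _ => s.2.1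
      have hqE' : qF ∈ E' := mem_iInter₂.mpr fun s _ => s.2.2
      have hE'K' : ∀ z : F, z ∈ E' → z ∉ K' := by
        intro z hzE hzK
        obtain ⟨s, hst, hzs⟩ := mem_iUnion₂.mp (ht hzK)
        exact hzs (mem_iInter₂.mp hzE s hst)
      set E : Set X := Subtype.val '' E' with hEdef
      have hqE : q ∈ E := ⟨qF, hqE', rfl⟩
      have hEF : E ⊆ F := by
        rintro _ ⟨z, _, rfl⟩
        exact z.2
      have hEcpt : IsCompact E :=
        (hE'clopen.1.isCompact).image continuous_subtype_val
      have hEclosed : IsClosed E := hEcpt.isClosed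
      -- E misses the closed ball of radius 3ρ/4
      have hEK : ∀ z ∈ E, ¬ (dist z w0 ≤ 3 * ρ / 4) := by
        rintro _ ⟨z, hzE, rfl⟩ hdist
        exact hE'K' z hzE ⟨z.2, Metric.mem_closedBall.mpr hdist⟩
      -- E is open in F: get an ambient open set O
      obtain ⟨O, hO, hOE⟩ := isOpen_induced_iff.mp hE'clopen.2
      have hEFO : E = F ∩ O := by
        ext z
        constructor
        · rintro ⟨z', hz', rfl⟩
          exact ⟨z'.2, by have : z' ∈ Subtype.val ⁻¹' O := hOE ▸ hz'; exact this⟩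
        · rintro ⟨hzF, hzO⟩
          exact ⟨⟨z, hzF⟩, hOE ▸ (show (⟨z, hzF⟩ : F) ∈ Subtype.val ⁻¹' O from hzO), rfl⟩
      -- E = Z ∩ W for an ambient open W
      set W : Set X := O ∩ {z | 3 * ρ / 4 < dist z w0} with hWdef
      have hWopen : IsOpen W :=
        hO.inter (isOpen_lt continuous_const ((continuous_id.dist continuous_const)))
      have hEZW : E = Z ∩ W := by
        ext z
        constructor
        · intro hzE
          have hzF : z ∈ F := hEF hzE
          have hzO : z ∈ O := (hEFO ▸ hzE).2
          have hzd : 3 * ρ / 4 < dist z w0 := lt_of_not_ge (hEK z hzE)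
          exact ⟨hzF.1, hzO, hzd⟩
        · rintro ⟨hzZ, hzO, hzd⟩
          have hzF : z ∈ F := by
            refine ⟨hzZ, ?_⟩
            rw [Metric.mem_ball]
            intro hlt
            simp only [mem_setOf_eq] at hzd
            linarith
          rw [hEFO]
          exact ⟨hzF, hzO⟩
      -- Z \ E is closed
      have hZEclosed : IsClosed (Z \ E) := by
        have : Z \ E = Z ∩ Wᶜ := by
          rw [hEZW]
          ext z
          simp only [mem_diff, mem_inter_iff, mem_compl_iff]
          tauto
        rw [this]
        exact (MC.isClosed_minCont w0 q).inter hWopen.isClosed_compl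
      -- Z is preconnected: contradiction
      have hsplitZ := (isPreconnected_iff_subset_of_fully_disjoint_closed
        (MC.isClosed_minCont w0 q)).mp (MC.isPreconnected_minCont hX w0 q)
        E (Z \ E) hEclosed hZEclosed
        (fun z hz => (em (z ∈ E)).imp id fun h => ⟨hz, h⟩)
        (disjoint_sdiff_self_right)
      rcases hsplitZ with hZE | hZE
      · have hw0E : w0 ∈ E := hZE hw0Z
        have hw0F : w0 ∈ F := hEF hw0E
        exact hw0F.2 (Metric.mem_ball_self (by linarith))
      · exact (hZE hqZ).2 hqE
    · -- Case 1: the component of q meets the ball around w0.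
      obtain ⟨s, hsC, hsB⟩ := hcase
      have hsM : s ∈ M := hballM hsB
      have hTs : MC.minCont s q ⊆ C :=
        MC.minCont_subset ⟨hCcpt, hCpc, hsC, hqC⟩
      have hw0C : w0 ∈ C := hTs (step6 s hsM hw0V)
      have hw0F : w0 ∈ F := hCsubF hw0C
      exact hw0F.2 (Metric.mem_ball_self (by linarith))
  -- M is clopen and nonempty, hence the whole space.
  have hMclosed : IsClosed M := isClosed_of_closure_subset hclosure
  exact IsClopen.eq_univ ⟨hMclosed, hopen⟩ ⟨x, hxM⟩
end

section
/- Let X be a hereditarily unicoherent continuum, K an indecomposable subcontinuum of X with nonempty interior, and x a point with M_x ∩ K nonempty. Then M_x ∩ K is a composant of K; in particular M_x is not closed in X. -/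
open Set Topology

/-- The composant of `y` in `K`: the union of all proper subcontinua of `K` containing `y`. -/
def Composant {X : Type} [TopologicalSpace X] (K : Set X) (y : X) : Set X :=
  ⋃₀ {L : Set X | L ⊆ K ∧ IsCompact L ∧ IsConnected L ∧ y ∈ L ∧ L ≠ K}

/-! ### Auxiliary lemmas -/

/-- The union of two nowhere dense sets is nowhere dense. -/
lemma isNowhereDense_union' {X : Type} [TopologicalSpace X] {s t : Set X}
    (hs : IsNowhereDense s) (ht : IsNowhereDense t) : IsNowhereDense (s ∪ t) := by
  rw [IsNowhereDense, closure_union]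
  have h1 : interior (closure s ∪ closure t) ∩ (closure s)ᶜ ⊆ interior (closure t) := by
    apply interior_maximal ?_ (isOpen_interior.inter isClosed_closure.isOpen_compl)
    rintro z ⟨hz, hz'⟩
    rcases interior_subset hz with h | h
    · exact absurd h hz'
    · exact h
  rw [ht] at h1
  have h2 : interior (closure s ∪ closure t) ⊆ closure s := by
    intro z hz
    by_contra h
    exact absurd (h1 ⟨hz, h⟩) (notMem_empty z)
  have h3 : interior (closure s ∪ closure t) ⊆ interior (closure s) :=
    interior_maximal h2 isOpen_interior
  rw [hs] at h3
  exact eq_empty_of_subset_empty h3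

/-- If a connected closed set is the union of two closed sets whose intersection is
contained in `F₂`, etc. : auxiliary step for `preconn_of_closed_union`. -/
lemma preconn_aux {X : Type} [TopologicalSpace X] {s C D : Set X}
    (hs : IsPreconnected s) (hsc : IsClosed s) (hC : IsClosed C) (hD : IsClosed D)
    (hCD : C ∪ D = s) (hDne : D.Nonempty)
    {F₁ F₂ : Set X} (h₁ : IsClosed F₁) (h₂ : IsClosed F₂) (hsub : C ⊆ F₁ ∪ F₂)
    (hdisj : Disjoint F₁ F₂) (hI : C ∩ D ⊆ F₂) : C ⊆ F₂ := by
  have hG₁ : IsClosed (C ∩ F₁) := hC.inter h₁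
  have hG₂ : IsClosed ((C ∩ F₂) ∪ D) := (hC.inter h₂).union hD
  have hcover : s ⊆ (C ∩ F₁) ∪ ((C ∩ F₂) ∪ D) := by
    intro z hz
    rw [← hCD] at hz
    rcases hz with hz | hz
    · rcases hsub hz with h | h
      · exact Or.inl ⟨hz, h⟩
      · exact Or.inr (Or.inl ⟨hz, h⟩)
    · exact Or.inr (Or.inr hz)
  have hdis : Disjoint (C ∩ F₁) ((C ∩ F₂) ∪ D) := by
    rw [Set.disjoint_left]
    rintro z ⟨hzC, hzF₁⟩ (⟨-, hzF₂⟩ | hzD)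
    · exact hdisj.ne_of_mem hzF₁ hzF₂ rfl
    · exact hdisj.ne_of_mem hzF₁ (hI ⟨hzC, hzD⟩) rfl
  rcases (isPreconnected_iff_subset_of_fully_disjoint_closed hsc).mp hs _ _ hG₁ hG₂
      hcover hdis with h | h
  · exfalso
    obtain ⟨d, hd⟩ := hDne
    have hdC : d ∈ C ∩ F₁ := h (by rw [← hCD]; exact Or.inr hd)
    exact hdisj.ne_of_mem hdC.2 (hI ⟨hdC.1, hd⟩) rfl
  · intro c hc
    rcases h (by rw [← hCD]; exact Or.inl hc) with ⟨-, h'⟩ | hD'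
    · exact h'
    · exact hI ⟨hc, hD'⟩

/-- If a closed connected set is the union of two closed sets whose intersection is
preconnected, and the second one is nonempty, then the first one is preconnected. -/
lemma preconn_of_closed_union {X : Type} [TopologicalSpace X] {s C D : Set X}
    (hs : IsPreconnected s) (hsc : IsClosed s) (hC : IsClosed C) (hD : IsClosed D)
    (hCD : C ∪ D = s) (hI : IsPreconnected (C ∩ D)) (hDne : D.Nonempty) :
    IsPreconnected C := by
  rw [isPreconnected_iff_subset_of_fully_disjoint_closed hC]
  intro F₁ F₂ h₁ h₂ hsub hdisj
  have hIc : IsClosed (C ∩ D) := hC.inter hD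
  rcases (isPreconnected_iff_subset_of_fully_disjoint_closed hIc).mp hI _ _ h₁ h₂
      (inter_subset_left.trans hsub) hdisj with h | h
  · exact Or.inl (preconn_aux hs hsc hC hD hCD hDne h₂ h₁
      (by rwa [union_comm] at hsub) hdisj.symm h)
  · exact Or.inr (preconn_aux hs hsc hC hD hCD hDne h₁ h₂ hsub hdisj h)

/-- In an indecomposable continuum `K`, the complement of a proper subcontinuum is dense. -/
lemma compl_dense_of_proper_subcontinuum {X : Type} [MetricSpace X] [CompactSpace X]
    {K P : Set X} (hKc : IsCompact K) (hKconn : IsConnected K) (hKind : IndecomposableSet K)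
    (hPK : P ⊆ K) (hPc : IsCompact P) (hPconn : IsPreconnected P) (hPne' : P ≠ K) :
    K ⊆ closure (K \ P) := by
  intro u hu
  by_contra hu'
  have hKcl : IsClosed K := hKc.isClosed
  have hPcl : IsClosed P := hPc.isClosed
  have hQK : closure (K \ P) ⊆ K := closure_minimal diff_subset hKcl
  have hQcl : IsClosed (closure (K \ P)) := isClosed_closure
  have hQc : IsCompact (closure (K \ P)) := hQcl.isCompact
  have huP : u ∈ P := by
    rcases em (u ∈ P) with h | h
    · exact h
    · exact absurd (subset_closure (show u ∈ K \ P from ⟨hu, h⟩)) hu'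
  have hPQ : P ∪ closure (K \ P) = K := by
    apply Subset.antisymm (union_subset hPK hQK)
    intro z hz
    rcases em (z ∈ P) with h | h
    · exact Or.inl h
    · exact Or.inr (subset_closure ⟨hz, h⟩)
  have hKPne : (K \ P).Nonempty := by
    rcases eq_empty_or_nonempty (K \ P) with h | h
    · exfalso
      apply hPne'
      apply Subset.antisymm hPK
      intro z hz
      rcases em (z ∈ P) with h' | h'
      · exact h'
      · exact absurd (show z ∈ K \ P from ⟨hz, h'⟩) (by rw [h]; exact notMem_empty z)
    · exact h
  have hQne : (closure (K \ P)).Nonempty := hKPne.mono subset_closure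
  have hQneK : closure (K \ P) ≠ K := fun h => hu' (by rw [h]; exact hu)
  apply hKind
  by_cases hQpc : IsPreconnected (closure (K \ P))
  · exact ⟨P, closure (K \ P), hPc, ⟨⟨u, huP⟩, hPconn⟩, hQc, ⟨hQne, hQpc⟩,
      hPK, hQK, hPne', hQneK, hPQ⟩
  · rw [isPreconnected_iff_subset_of_fully_disjoint_closed hQcl] at hQpc
    push_neg at hQpc
    obtain ⟨F₁, F₂, h₁, h₂, hsub, hdisj, hn₁, hn₂⟩ := hQpc
    have hAcl : IsClosed (closure (K \ P) ∩ F₁) := hQcl.inter h₁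
    have hBcl : IsClosed (closure (K \ P) ∩ F₂) := hQcl.inter h₂
    have hABdisj : Disjoint (closure (K \ P) ∩ F₁) (closure (K \ P) ∩ F₂) :=
      hdisj.mono inter_subset_right inter_subset_right
    have hABQ : closure (K \ P) ∩ F₁ ∪ closure (K \ P) ∩ F₂ = closure (K \ P) := by
      apply Subset.antisymm (union_subset inter_subset_left inter_subset_left)
      intro z hz
      rcases hsub hz with h | h
      · exact Or.inl ⟨hz, h⟩
      · exact Or.inr ⟨hz, h⟩
    have key : ∀ {F G : Set X}, IsClosed G → Disjoint F G → closure (K \ P) ⊆ F ∪ G →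
        ¬ closure (K \ P) ⊆ G → ∃ p, p ∈ closure (K \ P) ∩ F ∧ p ∈ K \ P := by
      intro F G hGcl hFG hsubFG hnG
      obtain ⟨a, haQ, haG⟩ := not_subset.mp hnG
      obtain ⟨p, hpG, hp⟩ := mem_closure_iff.mp haQ Gᶜ hGcl.isOpen_compl haG
      have hpQ : p ∈ closure (K \ P) := subset_closure hp
      have hpF : p ∈ F := (hsubFG hpQ).resolve_right hpG
      exact ⟨p, ⟨hpQ, hpF⟩, hp⟩
    obtain ⟨pA, hpA, hpA'⟩ := key h₂ hdisj hsub hn₂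
    obtain ⟨pB, hpB, hpB'⟩ := key h₁ hdisj.symm (by rwa [union_comm] at hsub) hn₁
    have hpArw : pA ∈ closure (K \ P) ∩ F₁ := hpA
    have hpBrw : pB ∈ closure (K \ P) ∩ F₂ := hpB
    have hun : (P ∪ closure (K \ P) ∩ F₁) ∪ (P ∪ closure (K \ P) ∩ F₂) = K := by
      rw [← union_union_distrib_left, hABQ, hPQ]
    have hint : (P ∪ closure (K \ P) ∩ F₁) ∩ (P ∪ closure (K \ P) ∩ F₂) = P := by
      ext z
      simp only [mem_inter_iff, mem_union]
      constructor
      · rintro ⟨h1 | h1, h2 | h2⟩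
        · exact h1
        · exact h1
        · exact h2
        · exact absurd rfl (hABdisj.ne_of_mem h1 h2)
      · exact fun h => ⟨Or.inl h, Or.inl h⟩
    have hne₁ : P ∪ closure (K \ P) ∩ F₁ ≠ K := by
      intro h
      have hmem : pB ∈ P ∪ closure (K \ P) ∩ F₁ := by rw [h]; exact hpB'.1
      rcases hmem with h' | h'
      · exact hpB'.2 h'
      · exact hABdisj.ne_of_mem h' hpBrw rfl
    have hne₂ : P ∪ closure (K \ P) ∩ F₂ ≠ K := by
      intro h
      have hmem : pA ∈ P ∪ closure (K \ P) ∩ F₂ := by rw [h]; exact hpA'.1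
      rcases hmem with h' | h'
      · exact hpA'.2 h'
      · exact hABdisj.symm.ne_of_mem h' hpArw rfl
    have hpc₁ : IsPreconnected (P ∪ closure (K \ P) ∩ F₁) := by
      apply preconn_of_closed_union hKconn.isPreconnected hKcl (hPcl.union hAcl)
        (hPcl.union hBcl) hun _ ⟨u, Or.inl huP⟩
      rw [hint]
      exact hPconn
    have hpc₂ : IsPreconnected (P ∪ closure (K \ P) ∩ F₂) := by
      apply preconn_of_closed_union hKconn.isPreconnected hKcl (hPcl.union hBcl)
        (hPcl.union hAcl) (by rw [union_comm] at hun; exact hun) _ ⟨u, Or.inl huP⟩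
      rw [inter_comm, hint]
      exact hPconn
    refine ⟨P ∪ closure (K \ P) ∩ F₁, P ∪ closure (K \ P) ∩ F₂,
      hPc.union hAcl.isCompact, ⟨⟨u, Or.inl huP⟩, hpc₁⟩,
      hPc.union hBcl.isCompact, ⟨⟨u, Or.inl huP⟩, hpc₂⟩,
      union_subset hPK (inter_subset_left.trans hQK),
      union_subset hPK (inter_subset_left.trans hQK),
      hne₁, hne₂, hun⟩

/-- A proper subcontinuum of an indecomposable continuum is nowhere dense. -/
lemma proper_subcontinuum_isNowhereDense {X : Type} [MetricSpace X] [CompactSpace X]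
    {K P : Set X} (hKc : IsCompact K) (hKconn : IsConnected K) (hKind : IndecomposableSet K)
    (hPK : P ⊆ K) (hPc : IsCompact P) (hPconn : IsPreconnected P) (hPne' : P ≠ K) :
    IsNowhereDense P := by
  rw [hPc.isClosed.isNowhereDense_iff]
  by_contra h
  obtain ⟨w, hw⟩ := nonempty_iff_ne_empty.mpr h
  have hwK : w ∈ K := hPK (interior_subset hw)
  obtain ⟨z, hzI, hzKP⟩ := mem_closure_iff.mp
    (compl_dense_of_proper_subcontinuum hKc hKconn hKind hPK hPc hPconn hPne' hwK)
    _ isOpen_interior hw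
  exact hzKP.2 (interior_subset hzI)

/-- The connected component of a point in a closed set is closed. -/
lemma isClosed_connectedComponentIn' {X : Type} [TopologicalSpace X] {F : Set X}
    (hF : IsClosed F) (x : X) : IsClosed (connectedComponentIn F x) := by
  by_cases hx : x ∈ F
  · apply isClosed_of_closure_subset
    exact IsPreconnected.subset_connectedComponentIn
      isPreconnected_connectedComponentIn.closure
      (subset_closure (mem_connectedComponentIn hx))
      (closure_minimal (connectedComponentIn_subset F x) hF)
  · rw [connectedComponentIn_eq_empty hx]
    exact isClosed_empty

/-- Boundary bumping core: if the connected component of `y` in `K ∩ closure U` is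
contained in the open set `U`, then all of `K` is contained in `U`. -/
lemma bumping_core {X : Type} [MetricSpace X] [CompactSpace X]
    {K U : Set X} (hKc : IsCompact K) (hKconn : IsPreconnected K) (hUo : IsOpen U)
    {y : X} (hyE : y ∈ K ∩ closure U)
    (hD : connectedComponentIn (K ∩ closure U) y ⊆ U) : K ⊆ U := by
  have hEc : IsCompact (K ∩ closure U) := hKc.inter_right isClosed_closure
  haveI : CompactSpace (K ∩ closure U : Set X) := isCompact_iff_compactSpace.mp hEc
  set y₀ : (K ∩ closure U : Set X) := ⟨y, hyE⟩ with hy₀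
  have hcomp : (Subtype.val '' connectedComponent y₀ : Set X) ⊆ U := by
    rw [← connectedComponentIn_eq_image hyE]
    exact hD
  have hFcl : IsClosed (Subtype.val ⁻¹' Uᶜ : Set (K ∩ closure U : Set X)) :=
    hUo.isClosed_compl.preimage continuous_subtype_val
  by_cases hex : ∃ Z : {Z : Set (K ∩ closure U : Set X) // IsClopen Z ∧ y₀ ∈ Z},
      (Z : Set (K ∩ closure U : Set X)) ∩ (Subtype.val ⁻¹' Uᶜ) = ∅
  · obtain ⟨⟨Z, hZclopen, hyZ⟩, hZ⟩ := hex
    have hZU : Z ⊆ Subtype.val ⁻¹' U := by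
      intro e he
      by_contra h
      have : e ∈ Z ∩ (Subtype.val ⁻¹' Uᶜ) := ⟨he, h⟩
      rw [hZ] at this
      exact this
    obtain ⟨W, hWo, hW⟩ := isOpen_induced_iff.mp hZclopen.isOpen
    have hVcl : IsClosed (Subtype.val '' Z : Set X) :=
      (hZclopen.isClosed.isCompact.image continuous_subtype_val).isClosed
    have hVeq : (Subtype.val '' Z : Set X) = W ∩ U ∩ K := by
      apply Subset.antisymm
      · rintro v ⟨e, heZ, rfl⟩
        have heW : (e : X) ∈ W := by rw [← hW] at heZ; exact heZ
        exact ⟨⟨heW, hZU heZ⟩, e.2.1⟩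
      · rintro v ⟨⟨hvW, hvU⟩, hvK⟩
        have hvE : v ∈ K ∩ closure U := ⟨hvK, subset_closure hvU⟩
        exact ⟨⟨v, hvE⟩, by rw [← hW]; exact hvW, rfl⟩
    have hF₂cl : IsClosed (K \ (W ∩ U)) := by
      rw [diff_eq]
      exact hKc.isClosed.inter (hWo.inter hUo).isClosed_compl
    have hcover : K ⊆ (Subtype.val '' Z : Set X) ∪ (K \ (W ∩ U)) := by
      intro z hz
      by_cases h : z ∈ W ∩ U
      · exact Or.inl (by rw [hVeq]; exact ⟨h, hz⟩)
      · exact Or.inr ⟨hz, h⟩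
    have hdisj : Disjoint (Subtype.val '' Z : Set X) (K \ (W ∩ U)) := by
      rw [Set.disjoint_left]
      intro v hv hv'
      apply hv'.2
      rw [hVeq] at hv
      exact hv.1
    rcases (isPreconnected_iff_subset_of_fully_disjoint_closed hKc.isClosed).mp hKconn
        _ _ hVcl hF₂cl hcover hdisj with h | h
    · intro z hz
      have := h hz
      rw [hVeq] at this
      exact this.1.2
    · exfalso
      have hyV : y ∈ (Subtype.val '' Z : Set X) := ⟨y₀, hyZ, rfl⟩
      rw [hVeq] at hyV
      exact (h hyE.1).2 hyV.1
  · exfalso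
    push_neg at hex
    haveI : Nonempty {Z : Set (K ∩ closure U : Set X) // IsClopen Z ∧ y₀ ∈ Z} :=
      ⟨⟨univ, isClopen_univ, mem_univ _⟩⟩
    have hne : ∀ Z : {Z : Set (K ∩ closure U : Set X) // IsClopen Z ∧ y₀ ∈ Z},
        ((Z : Set (K ∩ closure U : Set X)) ∩ (Subtype.val ⁻¹' Uᶜ)).Nonempty :=
      fun Z => hex Z
    have hdir : Directed (· ⊇ ·)
        (fun Z : {Z : Set (K ∩ closure U : Set X) // IsClopen Z ∧ y₀ ∈ Z} =>
          (Z : Set (K ∩ closure U : Set X)) ∩ (Subtype.val ⁻¹' Uᶜ)) := by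
      rintro ⟨Z₁, hZ₁, hy₁⟩ ⟨Z₂, hZ₂, hy₂⟩
      exact ⟨⟨Z₁ ∩ Z₂, hZ₁.inter hZ₂, ⟨hy₁, hy₂⟩⟩,
        inter_subset_inter_left _ inter_subset_left,
        inter_subset_inter_left _ inter_subset_right⟩
    obtain ⟨e, he⟩ := IsCompact.nonempty_iInter_of_directed_nonempty_isCompact_isClosed
      _ hdir hne (fun Z => (Z.2.1.isClosed.inter hFcl).isCompact)
      (fun Z => Z.2.1.isClosed.inter hFcl)
    have heC : e ∈ connectedComponent y₀ := by
      rw [connectedComponent_eq_iInter_isClopen y₀, mem_iInter]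
      intro Z
      exact (mem_iInter.mp he Z).1
    have heU : (e : X) ∈ U := hcomp ⟨e, heC, rfl⟩
    exact (mem_iInter.mp he ⟨univ, isClopen_univ, mem_univ _⟩).2 heU

/-- In an indecomposable continuum, no (nonempty) composant is closed. -/
lemma composant_not_closed {X : Type} [MetricSpace X] [CompactSpace X]
    {K : Set X} (hKc : IsCompact K) (hKconn : IsConnected K) (hKind : IndecomposableSet K)
    {y : X} (hy : y ∈ Composant K y) (hcl : IsClosed (Composant K y)) : False := by
  have hCK : Composant K y ⊆ K := sUnion_subset fun L hL => hL.1
  have hyK : y ∈ K := hCK hy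
  by_cases hCeqK : Composant K y = K
  · -- Baire category argument: `K` cannot be a countable union of nowhere dense continua.
    haveI : CompactSpace (K : Set X) := isCompact_iff_compactSpace.mp hKc
    haveI : Nonempty (K : Set X) := ⟨⟨y, hyK⟩⟩
    obtain ⟨B, hBc, -, hBbasis⟩ := TopologicalSpace.exists_countable_basis X
    haveI : Countable ({U : Set X | U ∈ B ∧ (U ∩ K).Nonempty} : Set (Set X)) :=
      (hBc.mono (fun U hU => hU.1)).to_subtype
    have hfcl : ∀ U : ({U : Set X | U ∈ B ∧ (U ∩ K).Nonempty} : Set (Set X)),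
        IsClosed (Subtype.val ⁻¹' connectedComponentIn (K \ U.val) y : Set (K : Set X)) := by
      intro U
      exact (isClosed_connectedComponentIn'
        (by rw [diff_eq]
            exact hKc.isClosed.inter (hBbasis.isOpen U.2.1).isClosed_compl) y).preimage
        continuous_subtype_val
    have hcov : ⋃ U : ({U : Set X | U ∈ B ∧ (U ∩ K).Nonempty} : Set (Set X)),
        (Subtype.val ⁻¹' connectedComponentIn (K \ U.val) y : Set (K : Set X)) = univ := by
      rw [eq_univ_iff_forall]
      rintro ⟨z, hzK⟩
      have hzC : z ∈ Composant K y := by rw [hCeqK]; exact hzK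
      obtain ⟨P, ⟨hPK, hPc, hPconn, hyP, hPne⟩, hzP⟩ := hzC
      have hKP : ¬ K ⊆ P := fun h => hPne (Subset.antisymm hPK h)
      obtain ⟨k, hkK, hkP⟩ := not_subset.mp hKP
      obtain ⟨U, hUB, hkU, hUP⟩ := hBbasis.exists_subset_of_mem_open
        (show k ∈ Pᶜ from hkP) hPc.isClosed.isOpen_compl
      have hUK : (U ∩ K).Nonempty := ⟨k, hkU, hkK⟩
      have hPsub : P ⊆ connectedComponentIn (K \ U) y :=
        hPconn.2.subset_connectedComponentIn hyP
          (fun p hp => ⟨hPK hp, fun hpU => hUP hpU hp⟩)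
      exact mem_iUnion.mpr ⟨⟨U, hUB, hUK⟩, hPsub hzP⟩
    obtain ⟨U, hU⟩ := nonempty_interior_of_iUnion_of_closed hfcl hcov
    have hUK : (U.val ∩ K).Nonempty := U.2.2
    have hGK : connectedComponentIn (K \ U.val) y ⊆ K :=
      (connectedComponentIn_subset _ _).trans diff_subset
    have hGcl : IsClosed (connectedComponentIn (K \ U.val) y) :=
      isClosed_connectedComponentIn'
        (by rw [diff_eq]
            exact hKc.isClosed.inter (hBbasis.isOpen U.2.1).isClosed_compl) y
    have hGne : connectedComponentIn (K \ U.val) y ≠ K := by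
      intro h
      obtain ⟨u, huU, huK⟩ := hUK
      have : u ∈ connectedComponentIn (K \ U.val) y := by rw [h]; exact huK
      exact (connectedComponentIn_subset _ _ this).2 huU
    have hdense := compl_dense_of_proper_subcontinuum hKc hKconn hKind hGK
      hGcl.isCompact isPreconnected_connectedComponentIn hGne
    obtain ⟨⟨z, hzK⟩, hz⟩ := hU
    obtain ⟨t, hts, hto, hzt⟩ := mem_interior.mp hz
    obtain ⟨W, hWo, hWt⟩ := isOpen_induced_iff.mp hto
    have hzW : z ∈ W := by rw [← hWt] at hzt; exact hzt
    obtain ⟨w, hwW, hwKG⟩ := mem_closure_iff.mp (hdense hzK) W hWo hzW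
    have hwt : (⟨w, hwKG.1⟩ : (K : Set X)) ∈ t := by rw [← hWt]; exact hwW
    exact hwKG.2 (hts hwt)
  · -- Boundary bumping argument: the composant must hit the boundary of any neighborhood.
    have hKnotsub : ¬ K ⊆ Composant K y := fun h => hCeqK (Subset.antisymm hCK h)
    obtain ⟨k, hkK, hkC⟩ := not_subset.mp hKnotsub
    obtain ⟨U, V, hUo, hVo, hCU, hkV, hUV⟩ := normal_separation hcl isClosed_singleton
      (disjoint_singleton_right.mpr hkC)
    have hkV' : k ∈ V := hkV rfl
    have hkU : k ∉ U := fun h => hUV.ne_of_mem h hkV' rfl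
    have hkclU : k ∉ closure U := by
      intro h
      obtain ⟨z, hzV, hzU⟩ := mem_closure_iff.mp h V hVo hkV'
      exact hUV.ne_of_mem hzU hzV rfl
    have hyE : y ∈ K ∩ closure U := ⟨hyK, subset_closure (hCU hy)⟩
    have hEcl : IsClosed (K ∩ closure U) := hKc.isClosed.inter isClosed_closure
    have hDcl : IsClosed (connectedComponentIn (K ∩ closure U) y) :=
      isClosed_connectedComponentIn' hEcl y
    have hDK : connectedComponentIn (K ∩ closure U) y ⊆ K :=
      (connectedComponentIn_subset _ _).trans inter_subset_left
    have hDneK : connectedComponentIn (K ∩ closure U) y ≠ K := by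
      intro h
      have : k ∈ connectedComponentIn (K ∩ closure U) y := by rw [h]; exact hkK
      exact hkclU (connectedComponentIn_subset _ _ this).2
    have hDC : connectedComponentIn (K ∩ closure U) y ⊆ Composant K y :=
      subset_sUnion_of_mem ⟨hDK, hDcl.isCompact,
        isConnected_connectedComponentIn_iff.mpr hyE, mem_connectedComponentIn hyE, hDneK⟩
    have hDU : connectedComponentIn (K ∩ closure U) y ⊆ U := hDC.trans hCU
    exact hkU (bumping_core hKc hKconn.isPreconnected hUo hyE hDU hkK)

/-- If `K` is an indecomposable subcontinuum with interior of a hereditarily unicoherent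
continuum and `M_x` meets `K`, then `M_x ∩ K` is a composant of `K`; in particular `M_x`
is not closed. -/
theorem meagerComposant_inter_indecomposable (X : Type) [MetricSpace X] [CompactSpace X] [ConnectedSpace X] [Nonempty X]
    (hX : HereditarilyUnicoherent X) (x : X) (K : Set X)
    (hKc : IsCompact K) (hKconn : IsConnected K) (hKind : IndecomposableSet K)
    (hKint : (interior K).Nonempty) (hmeet : (MeagerComposant X x ∩ K).Nonempty) :
    (∃ y ∈ K, MeagerComposant X x ∩ K = Composant K y) ∧
      ¬ IsClosed (MeagerComposant X x) := by
  obtain ⟨y, hyM, hyK⟩ := hmeet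
  obtain ⟨L₀, ⟨hL₀c, hL₀conn, hL₀nwd, hxL₀⟩, hyL₀⟩ := hyM
  have key : MeagerComposant X x ∩ K = Composant K y := by
    ext z
    constructor
    · rintro ⟨hzM, hzK⟩
      obtain ⟨L₁, ⟨hL₁c, hL₁conn, hL₁nwd, hxL₁⟩, hzL₁⟩ := hzM
      have hNconn : IsConnected (L₀ ∪ L₁) :=
        IsConnected.union ⟨x, hxL₀, hxL₁⟩ hL₀conn hL₁conn
      have hNc : IsCompact (L₀ ∪ L₁) := hL₀c.union hL₁c
      have hNnwd : IsNowhereDense (L₀ ∪ L₁) := isNowhereDense_union' hL₀nwd hL₁nwd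
      have hSpc : IsPreconnected ((L₀ ∪ L₁) ∩ K) := hX _ _ hNc hNconn hKc hKconn
      have hSc : IsCompact ((L₀ ∪ L₁) ∩ K) := hNc.inter_right hKc.isClosed
      have hyS : y ∈ (L₀ ∪ L₁) ∩ K := ⟨Or.inl hyL₀, hyK⟩
      have hSne : (L₀ ∪ L₁) ∩ K ≠ K := by
        intro h
        have hKN : K ⊆ L₀ ∪ L₁ := by
          intro w hw
          have : w ∈ (L₀ ∪ L₁) ∩ K := by rw [h]; exact hw
          exact this.1
        obtain ⟨o, ho⟩ := hKint
        have : o ∈ interior (closure (L₀ ∪ L₁)) :=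
          interior_mono (hKN.trans subset_closure) ho
        rw [hNnwd] at this
        exact this
      exact ⟨(L₀ ∪ L₁) ∩ K, ⟨inter_subset_right, hSc, ⟨⟨y, hyS⟩, hSpc⟩, hyS, hSne⟩,
        ⟨Or.inr hzL₁, hzK⟩⟩
    · rintro ⟨P, ⟨hPK, hPc, hPconn, hyP, hPneK⟩, hzP⟩
      refine ⟨?_, hPK hzP⟩
      have hPnwd : IsNowhereDense P :=
        proper_subcontinuum_isNowhereDense hKc hKconn hKind hPK hPc hPconn.2 hPneK
      exact ⟨L₀ ∪ P, ⟨hL₀c.union hPc,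
        IsConnected.union ⟨y, hyL₀, hyP⟩ hL₀conn hPconn,
        isNowhereDense_union' hL₀nwd hPnwd, Or.inl hxL₀⟩, Or.inr hzP⟩
  refine ⟨⟨y, hyK, key⟩, ?_⟩
  intro hMcl
  have hT : IsClosed (Composant K y) := by
    rw [← key]
    exact hMcl.inter hKc.isClosed
  have hyComp : y ∈ Composant K y := by
    rw [← key]
    exact ⟨⟨L₀, ⟨hL₀c, hL₀conn, hL₀nwd, hxL₀⟩, hyL₀⟩, hyK⟩
  exact composant_not_closed hKc hKconn hKind hyComp hT
end
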